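/- Let Λ > 0, let ρ̄ : (0,1] → ℝ be differentiable with ρ̄(1) > 0, let p̄ : (0,1] → ℝ satisfy 0 ≤ p̄(τ) ≤ ρ̄(τ)/3 for all τ ∈ (0,1], and suppose ρ̄ satisfies the background Euler equation ∂_τ ρ̄(τ) = (3/τ)(ρ̄(τ) + p̄(τ)) on (0,1]. Define ω²(τ) := (Λ + ρ̄(τ))/3 and Ω(τ) := −(ρ̄(τ) + p̄(τ))/2. Then for every τ ∈ (0,1]: (1/3)·ρ̄(1)·τ⁴ ≤ ω²(τ) − Λ/3 ≤ (1/3)·ρ̄(1)·τ³ and −(2/3)·τ³·ρ̄(1) ≤ Ω(τ) ≤ −(1/2)·τ⁴·ρ̄(1). -/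

import Mathlib

/-- Bounds on `ω²(τ) - Λ/3` and on `Ω(τ)`, where `ω² = (Λ + ρ̄)/3` and
`Ω = -(ρ̄ + p̄)/2`, for `τ ∈ (0,1]`. -/
theorem background_omega_bounds (Λ : ℝ) (hΛ : 0 < Λ) (ρ p : ℝ → ℝ)
    (hρ1 : 0 < ρ 1)
    (hp : ∀ τ ∈ Set.Ioc (0:ℝ) 1, 0 ≤ p τ ∧ p τ ≤ ρ τ / 3)
    (heuler : ∀ τ ∈ Set.Ioc (0:ℝ) 1, HasDerivAt ρ ((3 / τ) * (ρ τ + p τ)) τ) :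
    ∀ τ ∈ Set.Ioc (0:ℝ) 1,
      ((1/3) * ρ 1 * τ ^ 4 ≤ (Λ + ρ τ) / 3 - Λ / 3 ∧
        (Λ + ρ τ) / 3 - Λ / 3 ≤ (1/3) * ρ 1 * τ ^ 3) ∧
      (-((2/3) * τ ^ 3 * ρ 1) ≤ -((ρ τ + p τ) / 2) ∧
        -((ρ τ + p τ) / 2) ≤ -((1/2) * τ ^ 4 * ρ 1)) := by
  have hconv : Convex ℝ (Set.Ioc (0:ℝ) 1) := convex_Ioc 0 1
  have hcont : ContinuousOn ρ (Set.Ioc (0:ℝ) 1) := fun t ht =>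
    ((heuler t ht).continuousAt).continuousWithinAt
  have hint : interior (Set.Ioc (0:ℝ) 1) = Set.Ioo (0:ℝ) 1 := interior_Ioc
  -- derivatives of ρ t / t^3 and ρ t / t^4
  have hfd : ∀ t ∈ Set.Ioc (0:ℝ) 1,
      HasDerivAt (fun t => ρ t / t ^ 3) (3 * p t / t ^ 4) t := by
    intro t ht
    have ht0 : t ≠ 0 := ne_of_gt ht.1
    have h1 := (heuler t ht).div (hasDerivAt_pow 3 t) (pow_ne_zero 3 ht0)
    refine h1.congr_deriv ?_
    field_simp
    ring
  have hgd : ∀ t ∈ Set.Ioc (0:ℝ) 1,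
      HasDerivAt (fun t => ρ t / t ^ 4) ((3 * p t - ρ t) / t ^ 5) t := by
    intro t ht
    have ht0 : t ≠ 0 := ne_of_gt ht.1
    have h1 := (heuler t ht).div (hasDerivAt_pow 4 t) (pow_ne_zero 4 ht0)
    refine h1.congr_deriv ?_
    field_simp
    ring
  have hfmono : MonotoneOn (fun t => ρ t / t ^ 3) (Set.Ioc (0:ℝ) 1) := by
    apply monotoneOn_of_deriv_nonneg hconv
    · exact ContinuousOn.div hcont (by fun_prop) (fun t ht => pow_ne_zero 3 (ne_of_gt ht.1))
    · rw [hint]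
      intro t ht
      exact (hfd t (Set.Ioo_subset_Ioc_self ht)).differentiableAt.differentiableWithinAt
    · rw [hint]
      intro t ht
      have ht' : t ∈ Set.Ioc (0:ℝ) 1 := Set.Ioo_subset_Ioc_self ht
      rw [(hfd t ht').deriv]
      have h0 := (hp t ht').1
      have ht0 := ht'.1
      positivity
  have hganti : AntitoneOn (fun t => ρ t / t ^ 4) (Set.Ioc (0:ℝ) 1) := by
    apply antitoneOn_of_deriv_nonpos hconv
    · exact ContinuousOn.div hcont (by fun_prop) (fun t ht => pow_ne_zero 4 (ne_of_gt ht.1))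
    · rw [hint]
      intro t ht
      exact (hgd t (Set.Ioo_subset_Ioc_self ht)).differentiableAt.differentiableWithinAt
    · rw [hint]
      intro t ht
      have ht' : t ∈ Set.Ioc (0:ℝ) 1 := Set.Ioo_subset_Ioc_self ht
      rw [(hgd t ht').deriv]
      apply div_nonpos_of_nonpos_of_nonneg
      · linarith [(hp t ht').2]
      · exact pow_nonneg (le_of_lt ht'.1) 5
  intro τ hτ
  have hτ0 : 0 < τ := hτ.1
  have hτ1 : τ ≤ 1 := hτ.2
  have h1m : (1:ℝ) ∈ Set.Ioc (0:ℝ) 1 := by constructor <;> norm_num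
  have hup : ρ τ ≤ ρ 1 * τ ^ 3 := by
    have := hfmono hτ h1m hτ1
    simp only [one_pow, div_one] at this
    calc ρ τ = (ρ τ / τ ^ 3) * τ ^ 3 := by field_simp
    _ ≤ ρ 1 * τ ^ 3 := by
        apply mul_le_mul_of_nonneg_right this (by positivity)
  have hlow : ρ 1 * τ ^ 4 ≤ ρ τ := by
    have := hganti hτ h1m hτ1
    simp only [one_pow, div_one] at this
    calc ρ 1 * τ ^ 4 ≤ (ρ τ / τ ^ 4) * τ ^ 4 := by
          apply mul_le_mul_of_nonneg_right this (by positivity)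
    _ = ρ τ := by field_simp
  obtain ⟨hp0, hp3⟩ := hp τ hτ
  refine ⟨⟨by linarith, by linarith⟩, ⟨by linarith, by linarith⟩⟩
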